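/- Let f : ℝ → ℝ be differentiable with f(t₀) ≥ 0 and suppose there exist δ > 0 and m > 0 such that f'(t) ≥ m whenever f(t) < δ, for all t ∈ [t₀, t₁]. Then f(t) ≥ 0 on [t₀, t₁], and if t₁ - t₀ ≥ δ/m then f(t₁) ≥ δ. -/

import Mathlib

/-- Auxiliary barrier lemma: if `g a ≥ 0` and `deriv g ≥ 0` wherever `g < 0` on `[a,b]`,
then `g b ≥ 0`. -/
lemma aux_barrier (g : ℝ → ℝ) (hg : Differentiable ℝ g) (a b : ℝ) (hab : a ≤ b)
    (h0 : 0 ≤ g a) (hd : ∀ t, a ≤ t → t ≤ b → g t < 0 → 0 ≤ deriv g t) : 0 ≤ g b := by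
  by_contra hb
  push_neg at hb
  set S : Set ℝ := Set.Icc a b ∩ g ⁻¹' Set.Ici 0 with hS
  have hSne : S.Nonempty := ⟨a, ⟨le_refl a, hab⟩, h0⟩
  have hSbdd : BddAbove S := ⟨b, fun x hx => hx.1.2⟩
  have hSclosed : IsClosed S :=
    (isClosed_Icc.inter (isClosed_Ici.preimage hg.continuous))
  set u := sSup S with hu
  have huS : u ∈ S := hSclosed.csSup_mem hSne hSbdd
  obtain ⟨⟨hau, hub⟩, hgu⟩ := huS
  have hgu' : 0 ≤ g u := hgu
  have hub' : u < b := lt_of_le_of_ne hub (by intro h; rw [h] at hgu'; linarith)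
  have hneg : ∀ t, u < t → t ≤ b → g t < 0 := by
    intro t hut htb
    by_contra hge
    push_neg at hge
    have : t ∈ S := ⟨⟨hau.trans hut.le, htb⟩, hge⟩
    exact absurd (le_csSup hSbdd this) (not_le.mpr hut)
  have hmono : MonotoneOn g (Set.Icc u b) := by
    apply monotoneOn_of_deriv_nonneg (convex_Icc u b) hg.continuous.continuousOn
      (hg.differentiableOn.mono interior_subset)
    intro t htin
    rw [interior_Icc] at htin
    exact hd t (hau.trans htin.1.le) htin.2.le (hneg t htin.1 htin.2.le)
  have := hmono ⟨le_refl u, hub'.le⟩ ⟨hub'.le, le_refl b⟩ hub'.le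
  linarith

/-- Abstract barrier argument of Theorem 2: if `f t₀ ≥ 0` and `f' t ≥ m > 0` whenever
`f t < δ` on `[t₀, t₁]`, then `f ≥ 0` on `[t₀, t₁]`, and `f t₁ ≥ δ` provided
`t₁ - t₀ ≥ δ / m`. -/
theorem stmt_11 (f : ℝ → ℝ) (t₀ t₁ δ m : ℝ)
    (hf : Differentiable ℝ f)
    (hδ : 0 < δ) (hm : 0 < m) (ht : t₀ ≤ t₁)
    (h0 : 0 ≤ f t₀)
    (hderiv : ∀ t ∈ Set.Icc t₀ t₁, f t < δ → m ≤ deriv f t) :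
    (∀ t ∈ Set.Icc t₀ t₁, 0 ≤ f t) ∧ (δ / m ≤ t₁ - t₀ → δ ≤ f t₁) := by
  constructor
  · intro t htin
    apply aux_barrier f hf t₀ t htin.1 h0
    intro s hs hst hsneg
    have := hderiv s ⟨hs, hst.trans htin.2⟩ (hsneg.trans hδ)
    linarith
  · intro hlen
    set t' := t₀ + δ / m with ht'
    have hδm : 0 < δ / m := div_pos hδ hm
    have ht't₁ : t' ≤ t₁ := by rw [ht']; linarith
    have ht₀t' : t₀ ≤ t' := by rw [ht']; linarith
    -- Step A : f t' ≥ δ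
    have hlin : ∀ t : ℝ, HasDerivAt (fun s => f s - m * (s - t₀)) (deriv f t - m) t := by
      intro t
      exact (hf t).hasDerivAt.sub
        (((hasDerivAt_id t).sub_const t₀).const_mul m |>.congr_deriv (by ring))
    have hderivg : ∀ t : ℝ, deriv (fun s => f s - m * (s - t₀)) t = deriv f t - m :=
      fun t => (hlin t).deriv
    have hstepA : 0 ≤ f t' - m * (t' - t₀) := by
      apply aux_barrier (fun s => f s - m * (s - t₀)) (hf.sub (((differentiable_id).sub_const t₀).const_mul m)) t₀ t' ht₀t'
      · simpa using h0
      · intro s hs hst' hneg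
        rw [hderivg s]
        have hfs : f s < δ := by
          have hms : m * (s - t₀) ≤ m * (t' - t₀) := by nlinarith
          have : m * (t' - t₀) = δ := by
            rw [ht']; field_simp; ring
          nlinarith
        have := hderiv s ⟨hs, hst'.trans ht't₁⟩ hfs
        linarith
    have hft' : δ ≤ f t' := by
      have : m * (t' - t₀) = δ := by rw [ht']; field_simp; ring
      linarith
    -- Step B : f t₁ ≥ δ
    have hstepB : 0 ≤ f t₁ - δ := by
      apply aux_barrier (fun s => f s - δ) (hf.sub_const δ) t' t₁ ht't₁
      · simpa using hft'
      · intro s hs hst hneg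
        have hfs : f s < δ := by simpa using hneg
        have := hderiv s ⟨ht₀t'.trans hs, hst⟩ hfs
        rw [deriv_sub_const]
        linarith
    linarith
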